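/- Let G = (V,E) be a graph (self-loops allowed) on n vertices whose every connected component is a tree plus one extra edge whose unique cycle has odd length. Then for generic (e.g., all nonzero) p : V → R, the only solution ẋ : V → R of the system p_i ẋ_j + p_j ẋ_i = 0 for all (i,j) ∈ E is ẋ = 0. Conversely, if some component's unique cycle has even length, a nonzero solution exists. -/

import Mathlib

open SimpleGraph

section Helpers
variable {W : Type} {H H' : SimpleGraph W}

/-- A closed walk with nodup support is nil. -/
lemma closed_nodup_nil {a : W} (r : H.Walk a a) (h : r.support.Nodup) : r = Walk.nil := by
  cases r with
  | nil => rfl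
  | cons h' t =>
    exfalso
    rw [Walk.support_cons] at h
    exact (List.nodup_cons.mp h).1 t.end_mem_support

/-- Transfer reachability along adjacency-implies-reachability. -/
lemma reach_mono (h : ∀ x y, H.Adj x y → H'.Reachable x y) {a b : W}
    (r : H.Reachable a b) : H'.Reachable a b := by
  obtain ⟨w⟩ := r
  induction w with
  | nil => exact Reachable.refl _
  | cons ha _ ih => exact (h _ _ ha).trans ih

/-- Deleting an edge lying on a cycle preserves connectivity. -/
lemma del_conn (hc : H.Connected) {u : W} {c : H.Walk u u} (hcyc : c.IsCycle)
    {e : Sym2 W} (he : e ∈ c.edges) : (H.deleteEdges {e}).Connected := by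
  induction e with
  | h x y =>
    obtain ⟨hadj, hreach⟩ := adj_and_reachable_delete_edges_iff_exists_cycle.mpr ⟨u, c, hcyc, he⟩
    have hr : (H.deleteEdges {s(x,y)}).Reachable x y := hreach
    rw [connected_iff] at hc ⊢
    refine ⟨fun a b => ?_, hc.2⟩
    refine reach_mono (fun p q hpq => ?_) (hc.1 a b)
    by_cases hpq' : s(p, q) = s(x, y)
    · rw [Sym2.eq_iff] at hpq'
      rcases hpq' with ⟨rfl, rfl⟩ | ⟨rfl, rfl⟩
      · exact hr
      · exact hr.symm
    · exact SimpleGraph.Adj.reachable (by simp [deleteEdges_adj, hpq, hpq'])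

end Helpers
open SimpleGraph

/-- A finite connected graph has at least `card W - 1` edges. -/
lemma conn_card {W : Type} [Fintype W] :
    ∀ (n : ℕ) (H : SimpleGraph W), H.Connected → Nat.card H.edgeSet = n →
      Fintype.card W ≤ n + 1 := by
  intro n
  induction n using Nat.strong_induction_on with
  | _ n ih =>
    intro H hconn hcard
    classical
    by_cases hac : H.IsAcyclic
    · have htree : H.IsTree := ⟨hconn, hac⟩
      have := htree.card_edgeFinset
      rw [← this]
      have : Nat.card H.edgeSet = H.edgeFinset.card := by
        rw [Nat.card_eq_fintype_card, ← Set.toFinset_card]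
        unfold edgeFinset; congr
      omega
    · rw [isAcyclic_iff_forall_edge_isBridge] at hac
      push_neg at hac
      obtain ⟨e, heE, hbr⟩ := hac
      rw [isBridge_iff_mem_and_forall_cycle_notMem heE] at hbr
      push_neg at hbr
      obtain ⟨u, c, hcyc, hec⟩ := hbr
      have hconn' := del_conn hconn hcyc hec
      have hcard' : Nat.card (H.deleteEdges {e}).edgeSet = n - 1 := by
        rw [edgeSet_deleteEdges]
        rw [Nat.card_coe_set_eq] at hcard ⊢
        rw [Set.ncard_diff_singleton_of_mem heE, hcard]
      have hn : 1 ≤ n := by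
        rw [Nat.card_coe_set_eq] at hcard
        have : e ∈ H.edgeSet := heE
        have hpos : 0 < H.edgeSet.ncard := by
          rw [Set.ncard_pos (H.edgeSet.toFinite)]
          exact ⟨e, heE⟩
        omega
      have := ih (n - 1) (by omega) _ hconn' hcard'
      omega
open SimpleGraph

/-- In a connected graph with as many edges as vertices, there cannot be two cycles
one of which uses an edge the other avoids. -/
lemma two_cycles_false {W : Type} [Fintype W] (H : SimpleGraph W)
    (hconn : H.Connected) (hcard : Nat.card H.edgeSet = Fintype.card W)
    {a b : W} {c1 : H.Walk a a} {c2 : H.Walk b b} (h1 : c1.IsCycle) (h2 : c2.IsCycle)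
    {e : Sym2 W} (he1 : e ∈ c1.edges) (he2 : e ∉ c2.edges) : False := by
  classical
  set H1 := H.deleteEdges {e} with hH1
  have hconn1 : H1.Connected := del_conn hconn h1 he1
  -- transfer c2 to H1
  have hc2' : ∀ f ∈ c2.edges, f ∉ ({e} : Set (Sym2 W)) := by
    intro f hf hfe
    rw [Set.mem_singleton_iff] at hfe
    exact he2 (hfe ▸ hf)
  have h2' : (c2.toDeleteEdges {e} hc2').IsCycle := Walk.IsCycle.toDeleteEdges (G := H) ({e} : Set (Sym2 W)) h2 hc2'
  -- pick an edge of the surviving cycle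
  have hne : (c2.toDeleteEdges {e} hc2').edges ≠ [] := by
    have h3 := h2'.three_le_length
    intro hnil
    have : (c2.toDeleteEdges {e} hc2').length = 0 := by
      rw [← Walk.length_edges, hnil]; rfl
    omega
  obtain ⟨e2, he2'⟩ := List.exists_mem_of_ne_nil _ hne
  have hconn2 : (H1.deleteEdges {e2}).Connected := del_conn hconn1 h2' he2'
  -- edge counts
  have heE : e ∈ H.edgeSet := c1.edges_subset_edgeSet he1
  have he2E : e2 ∈ H1.edgeSet := (c2.toDeleteEdges {e} hc2').edges_subset_edgeSet he2'
  have hcard1 : (H1.edgeSet).ncard = Fintype.card W - 1 := by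
    rw [hH1, edgeSet_deleteEdges, Set.ncard_diff_singleton_of_mem heE]
    rw [Nat.card_coe_set_eq] at hcard
    rw [hcard]
  have hcard2 : ((H1.deleteEdges {e2}).edgeSet).ncard = Fintype.card W - 2 := by
    rw [edgeSet_deleteEdges, Set.ncard_diff_singleton_of_mem he2E, hcard1]
    omega
  have hWpos : 2 ≤ Fintype.card W := by
    have hsub : {e, e2} ⊆ H.edgeSet := by
      rintro f (rfl | rfl)
      · exact heE
      · have := he2E
        rw [hH1, edgeSet_deleteEdges] at this
        exact this.1
    have hcard' : ({e, e2} : Set (Sym2 W)).ncard ≤ H.edgeSet.ncard :=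
      Set.ncard_le_ncard hsub (H.edgeSet.toFinite)
    have hene2 : e ≠ e2 := by
      intro h
      have := he2E
      rw [hH1, edgeSet_deleteEdges] at this
      exact this.2 (by simp [← h])
    rw [Set.ncard_pair hene2] at hcard'
    rw [Nat.card_coe_set_eq] at hcard
    omega
  have := conn_card (Fintype.card W - 2) (H1.deleteEdges {e2}) hconn2
    (by rw [Nat.card_coe_set_eq]; exact hcard2)
  omega
open SimpleGraph

/-- A walk whose support lies in `S` lifts to the induced graph on `S`. -/
lemma exists_induce_walk {V : Type} {G : SimpleGraph V} {S : Set V} :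
    ∀ {a b : V} (w : G.Walk a b) (hS : ∀ x ∈ w.support, x ∈ S),
      ∃ w' : (G.induce S).Walk ⟨a, hS a w.start_mem_support⟩ ⟨b, hS b w.end_mem_support⟩,
        w'.map (SimpleGraph.Embedding.induce S).toHom = w := by
  intro a b w
  induction w with
  | nil =>
    intro hS
    exact ⟨Walk.nil, rfl⟩
  | @cons a c b h q ih =>
    intro hS
    have hSq : ∀ x ∈ q.support, x ∈ S := fun x hx => hS x (by simp [hx])
    obtain ⟨w', hw'⟩ := ih hSq
    have hadj : (G.induce S).Adj ⟨a, hS a (by simp)⟩ ⟨c, hSq c q.start_mem_support⟩ := by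
      simpa using h
    exact ⟨Walk.cons hadj w', by simp [hw']⟩
open SimpleGraph

/-- A closed walk with nodup support is nil. -/
lemma closed_nodup_nil' {V : Type} {G : SimpleGraph V} {a : V} (r : G.Walk a a)
    (h : r.support.Nodup) : r = Walk.nil := by
  cases r with
  | nil => rfl
  | cons h' t =>
    exfalso
    rw [Walk.support_cons] at h
    exact (List.nodup_cons.mp h).1 t.end_mem_support

/-- Any closed walk of odd length contains an odd cycle (on its support). -/
lemma odd_walk_cycle {V : Type} {G : SimpleGraph V} :
    ∀ (n : ℕ) {a : V} (w : G.Walk a a), w.length = n → Odd w.length →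
      ∃ (b : V) (c : G.Walk b b), c.IsCycle ∧ Odd c.length ∧ ∀ x ∈ c.support, x ∈ w.support := by
  classical
  intro n
  induction n using Nat.strong_induction_on with
  | _ n ih =>
    intro a w hlen hodd
    by_cases hnd : w.support.tail.Nodup
    · -- `w` is itself a cycle
      refine ⟨a, w, ?_, hodd, fun x hx => hx⟩
      cases w with
      | nil => simp at hodd
      | @cons _ d _ h q =>
        rw [Walk.support_cons, List.tail_cons] at hnd
        rw [Walk.cons_isCycle_iff]
        refine ⟨(Walk.isPath_def q).mpr hnd, ?_⟩
        intro hmem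
        cases q with
        | nil => simp at hmem
        | @cons _ d' _ h' r =>
          rw [Walk.edges_cons, List.mem_cons] at hmem
          rw [Walk.support_cons] at hnd
          have hd : d ∉ r.support := (List.nodup_cons.mp hnd).1
          rcases hmem with heq | hmem
          · rw [Sym2.eq_iff] at heq
            rcases heq with ⟨rfl, rfl⟩ | ⟨rfl, -⟩
            · exact G.loopless.irrefl _ h
            · have hrnil : r = Walk.nil := closed_nodup_nil' r (List.nodup_cons.mp hnd).2
              subst hrnil
              simp [Nat.odd_iff] at hodd
          · exact hd (Walk.snd_mem_support_of_mem_edges r hmem)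
    · -- a repeated vertex: split into two shorter closed walks
      obtain ⟨b, hb⟩ := List.exists_duplicate_iff_not_nodup.mpr hnd
      have hcount : 2 ≤ w.support.tail.count b := List.duplicate_iff_two_le_count.mp hb
      have hbsup : b ∈ w.support := by
        rw [w.support_eq_cons]
        exact List.mem_cons_of_mem _ hb.mem
      have hlenrot : (w.rotate b hbsup).length = w.length := by
        have h1 := (w.rotate_darts b hbsup).perm.length_eq
        rwa [Walk.length_darts, Walk.length_darts] at h1
      have hcountrot : 2 ≤ (w.rotate b hbsup).support.tail.count b :=
        ((w.support_rotate b hbsup).perm.count_eq b) ▸ hcount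
      have hsuprot : ∀ x ∈ (w.rotate b hbsup).support, x ∈ w.support := by
        intro x hx
        rw [(w.rotate b hbsup).support_eq_cons] at hx
        rcases List.mem_cons.mp hx with rfl | hx
        · exact hbsup
        · rw [w.support_eq_cons]
          exact List.mem_cons_of_mem _ (((w.support_rotate b hbsup).mem_iff).mp hx)
      generalize hw' : w.rotate b hbsup = w' at hlenrot hcountrot hsuprot
      cases w' with
      | nil =>
        rw [← hlenrot] at hodd
        simp [Nat.odd_iff] at hodd
      | @cons _ d _ h q =>
        rw [Walk.support_cons, List.tail_cons] at hcountrot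
        have hbq : b ∈ q.support := by
          rw [← List.count_pos_iff]
          omega
        have hspec : (q.takeUntil b hbq).append (q.dropUntil b hbq) = q := q.take_spec hbq
        have hlsum : (q.takeUntil b hbq).length + (q.dropUntil b hbq).length = q.length := by
          have := congrArg Walk.length hspec
          rwa [Walk.length_append] at this
        have hq2len : (q.dropUntil b hbq).length ≠ 0 := by
          intro h0
          have hq2nil : (q.dropUntil b hbq).support.tail = [] := by
            cases hq : q.dropUntil b hbq with
            | nil => rfl
            | cons _ _ => rw [hq] at h0; simp [Walk.length_cons] at h0
          have hsupeq := congrArg Walk.support hspec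
          rw [Walk.support_append] at hsupeq
          have hcnt : q.support.count b
              = (q.takeUntil b hbq).support.count b
                + (q.dropUntil b hbq).support.tail.count b := by
            rw [← hsupeq, List.count_append]
          rw [hq2nil, q.count_support_takeUntil_eq_one hbq] at hcnt
          simp at hcnt
          omega
        have hsupq : ∀ x ∈ q.support, x ∈ w.support := by
          intro x hx
          exact hsuprot x (by rw [Walk.support_cons]; exact List.mem_cons_of_mem _ hx)
        have htot : (Walk.cons h (q.takeUntil b hbq)).length + (q.dropUntil b hbq).length
            = w.length := by
          rw [Walk.length_cons, ← hlenrot, Walk.length_cons]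
          omega
        rcases Nat.even_or_odd (q.dropUntil b hbq).length with he2 | ho2
        · -- first part is odd
          have ho1 : Odd (Walk.cons h (q.takeUntil b hbq)).length := by
            rw [Nat.odd_iff] at hodd ⊢
            rw [Nat.even_iff] at he2
            omega
          obtain ⟨b', c', hc', hodd', hsupp'⟩ :=
            ih (Walk.cons h (q.takeUntil b hbq)).length (by omega)
              (Walk.cons h (q.takeUntil b hbq)) rfl ho1
          refine ⟨b', c', hc', hodd', fun x hx => ?_⟩
          have hx' := hsupp' x hx
          rw [Walk.support_cons] at hx'
          rcases List.mem_cons.mp hx' with rfl | hx'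
          · exact hbsup
          · exact hsupq _ (q.support_takeUntil_subset hbq hx')
        · -- second part is odd
          obtain ⟨b', c', hc', hodd', hsupp'⟩ :=
            ih (q.dropUntil b hbq).length
              (by rw [Walk.length_cons] at htot; omega)
              (q.dropUntil b hbq) rfl ho2
          exact ⟨b', c', hc', hodd',
            fun x hx => hsupq _ (q.support_dropUntil_subset hbq (hsupp' x hx))⟩
open SimpleGraph

lemma comp_contra {V : Type} [Fintype V] (G : SimpleGraph V)
    (hE : ∀ c : G.ConnectedComponent,
      Nat.card {e : Sym2 V // e ∈ G.edgeSet ∧ ∀ v ∈ e, G.connectedComponentMk v = c} =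
      Nat.card {v : V // G.connectedComponentMk v = c})
    {v b : V} {C : G.Walk v v} {D : G.Walk b b}
    (hC : C.IsCycle) (hCeven : Even C.length) (hD : D.IsCycle) (hDodd : Odd D.length)
    (hvb : G.Reachable v b) : False := by
  classical
  set c := G.connectedComponentMk v with hc
  set S : Set V := {u | G.connectedComponentMk u = c} with hSdef
  haveI : Fintype ↥S := Fintype.ofFinite ↥S
  have hmemS : ∀ {u}, G.Reachable v u → u ∈ S := by
    intro u hu
    rw [hSdef, Set.mem_setOf_eq, hc]
    exact (ConnectedComponent.sound hu).symm
  set H := G.induce S with hHdef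
  have hSv : v ∈ S := hmemS (Reachable.refl v)
  -- connectivity
  have hconn : H.Connected := by
    rw [connected_iff]
    constructor
    · rintro ⟨u1, hu1⟩ ⟨u2, hu2⟩
      have hr : G.Reachable u1 u2 := ConnectedComponent.exact (hu1.trans hu2.symm)
      obtain ⟨wuu⟩ := hr
      have hsup : ∀ x ∈ wuu.support, x ∈ S := by
        intro x hx
        rw [hSdef, Set.mem_setOf_eq, ← hu1]
        exact (ConnectedComponent.sound (⟨wuu.takeUntil x hx⟩ : G.Reachable u1 x)).symm
      obtain ⟨w', -⟩ := exists_induce_walk wuu hsup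
      exact ⟨w'⟩
    · exact ⟨⟨v, hSv⟩⟩
  -- edge count
  have hinduceAdj : ∀ (x y : ↥S), H.Adj x y ↔ G.Adj x.val y.val := by
    intro x y; rw [hHdef]; simp [comap_adj]
  have hbij : Nat.card H.edgeSet =
      Nat.card {e : Sym2 V // e ∈ G.edgeSet ∧ ∀ x ∈ e, G.connectedComponentMk x = c} := by
    apply Nat.card_congr
    refine Equiv.ofBijective
      (fun ep => ⟨Sym2.map Subtype.val ep.val, ?_⟩) ⟨?_, ?_⟩
    · obtain ⟨e, he⟩ := ep
      induction e with
      | h x y =>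
        rw [mem_edgeSet, hinduceAdj] at he
        refine ⟨?_, ?_⟩
        · simpa [Sym2.map_pair_eq] using he
        · intro z hz
          rw [Sym2.map_pair_eq, Sym2.mem_iff] at hz
          rcases hz with rfl | rfl
          · exact x.2
          · exact y.2
    · rintro ⟨e1, he1⟩ ⟨e2, he2⟩ hab
      have := congrArg Subtype.val hab
      simp only at this
      exact Subtype.ext (Sym2.map.injective Subtype.val_injective this)
    · rintro ⟨e, heE, hcomp⟩
      induction e with
      | h x y =>
        have hx : x ∈ S := hcomp x (Sym2.mem_mk_left x y)
        have hy : y ∈ S := hcomp y (Sym2.mem_mk_right x y)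
        refine ⟨⟨s(⟨x, hx⟩, ⟨y, hy⟩), ?_⟩, ?_⟩
        · rw [mem_edgeSet, hinduceAdj]
          exact heE
        · apply Subtype.ext
          simp [Sym2.map_pair_eq]
  have hcardV : Nat.card {u : V // G.connectedComponentMk u = c} = Fintype.card ↥S := by
    rw [← Nat.card_eq_fintype_card]
    apply Nat.card_congr
    exact Equiv.subtypeEquivRight (fun u => by rw [hSdef]; exact Iff.rfl)
  have hcardE : Nat.card H.edgeSet = Fintype.card ↥S := by
    rw [hbij, hE c, hcardV]
  -- transfer the cycles
  have hinj : Function.Injective ((SimpleGraph.Embedding.induce S).toHom : H →g G) :=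
    Subtype.val_injective
  have hCsup : ∀ x ∈ C.support, x ∈ S := fun x hx => hmemS ⟨C.takeUntil x hx⟩
  obtain ⟨C', hC'map⟩ := exists_induce_walk C hCsup
  have hC'cyc : C'.IsCycle :=
    (Walk.map_isCycle_iff_of_injective hinj).mp (by rw [hC'map]; exact hC)
  have hC'len : C'.length = C.length := by
    have := congrArg Walk.length hC'map
    rwa [Walk.length_map] at this
  have hDsup : ∀ x ∈ D.support, x ∈ S := fun x hx =>
    hmemS (hvb.trans ⟨D.takeUntil x hx⟩)
  obtain ⟨D', hD'map⟩ := exists_induce_walk D hDsup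
  have hD'cyc : D'.IsCycle :=
    (Walk.map_isCycle_iff_of_injective hinj).mp (by rw [hD'map]; exact hD)
  have hD'len : D'.length = D.length := by
    have := congrArg Walk.length hD'map
    rwa [Walk.length_map] at this
  -- find a distinguishing edge
  have hkey : (∃ e, e ∈ C'.edges ∧ e ∉ D'.edges) ∨ (∃ e, e ∈ D'.edges ∧ e ∉ C'.edges) := by
    by_contra hcon
    push_neg at hcon
    obtain ⟨h1, h2⟩ := hcon
    have hfs : C'.edges.toFinset = D'.edges.toFinset := by
      apply Finset.ext
      intro e
      simp only [List.mem_toFinset]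
      constructor
      · exact h1 e
      · exact h2 e
    have hc1 := List.toFinset_card_of_nodup hC'cyc.edges_nodup
    have hc2 := List.toFinset_card_of_nodup hD'cyc.edges_nodup
    rw [hfs] at hc1
    rw [hc1] at hc2
    rw [Walk.length_edges, Walk.length_edges] at hc2
    rw [hD'len, hC'len] at hc2
    rw [Nat.even_iff] at hCeven
    rw [Nat.odd_iff] at hDodd
    omega
  rcases hkey with ⟨e, he1, he2⟩ | ⟨e, he1, he2⟩
  · exact two_cycles_false H hconn hcardE hC'cyc hD'cyc he1 he2
  · exact two_cycles_false H hconn hcardE hD'cyc hC'cyc he1 he2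
open SimpleGraph

lemma walk_ratio {V : Type} {G : SimpleGraph V} {p x : V → ℝ} (hp : ∀ i, p i ≠ 0)
    (hx : ∀ i j, G.Adj i j → p i * x j + p j * x i = 0) :
    ∀ {a b : V} (w : G.Walk a b), x b / p b = (-1 : ℝ) ^ w.length * (x a / p a) := by
  intro a b w
  induction w with
  | nil => simp
  | @cons a c b h q ih =>
    have hac := hx a c h
    have hstep : x c / p c = -(x a / p a) := by
      have ha := hp a
      have hc := hp c
      field_simp
      linear_combination hac
    rw [ih, hstep, Walk.length_cons, pow_succ]
    ring


/-- 1D Gram local completion: if every connected component of G is a tree plus one extra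
edge (edge count = vertex count per component) and each component contains an odd cycle,
then for nonzero p the only solution of p_i ẋ_j + p_j ẋ_i = 0 over edges is ẋ = 0.
Conversely, if some component's cycle has even length, a nonzero solution exists. -/
theorem stmt_6 {V : Type} [Fintype V] (G : SimpleGraph V)
    (hE : ∀ c : G.ConnectedComponent,
      Nat.card {e : Sym2 V // e ∈ G.edgeSet ∧ ∀ v ∈ e, G.connectedComponentMk v = c} =
      Nat.card {v : V // G.connectedComponentMk v = c})
    (p : V → ℝ) (hp : ∀ i, p i ≠ 0) :
    ((∀ c : G.ConnectedComponent, ∃ v, G.connectedComponentMk v = c ∧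
        ∃ w : G.Walk v v, w.IsCycle ∧ Odd w.length) →
      ∀ x : V → ℝ, (∀ i j, G.Adj i j → p i * x j + p j * x i = 0) → x = 0) ∧
    ((∃ (v : V) (w : G.Walk v v), w.IsCycle ∧ Even w.length) →
      ∃ x : V → ℝ, x ≠ 0 ∧ ∀ i j, G.Adj i j → p i * x j + p j * x i = 0) := by
  classical
  constructor
  · -- all components have odd cycles : only the zero solution
    intro hoddall x hx
    funext u
    simp only [Pi.zero_apply]
    obtain ⟨v, hv, w, hcyc, hodd⟩ := hoddall (G.connectedComponentMk u)
    have hxv : x v = 0 := by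
      have h1 := walk_ratio hp hx w
      rw [Odd.neg_one_pow hodd] at h1
      have h2 : x v / p v = 0 := by linarith
      rcases div_eq_zero_iff.mp h2 with h3 | h3
      · exact h3
      · exact absurd h3 (hp v)
    obtain ⟨wv⟩ : G.Reachable v u := ConnectedComponent.exact hv
    have h2 := walk_ratio hp hx wv
    rw [hxv] at h2
    simp only [zero_div, mul_zero] at h2
    rcases div_eq_zero_iff.mp h2 with h3 | h3
    · exact h3
    · exact absurd h3 (hp u)
  · -- an even cycle : a nonzero solution
    rintro ⟨v, C, hC, hCeven⟩
    -- every closed walk at v has even length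
    have claim : ∀ w : G.Walk v v, Even w.length := by
      intro w
      by_contra hodd'
      rw [Nat.not_even_iff_odd] at hodd'
      obtain ⟨b, D, hD, hDodd, hDsupp⟩ := odd_walk_cycle w.length w rfl hodd'
      exact comp_contra G hE hC hCeven hD hDodd ⟨w.takeUntil b (hDsupp b D.start_mem_support)⟩
    -- build the solution from walk parities
    refine ⟨fun u => if h : G.Reachable v u then
        (-1 : ℝ) ^ (h.some.length) * p u else 0, ?_, ?_⟩
    · intro hzero
      have hv : G.Reachable v v := Reachable.refl v
      have := congrFun hzero v
      rw [dif_pos hv] at this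
      simp only [Pi.zero_apply, mul_eq_zero] at this
      rcases this with h1 | h1
      · exact pow_ne_zero _ (by norm_num : (-1 : ℝ) ≠ 0) h1
      · exact hp v h1
    · intro i j hij
      by_cases hi : G.Reachable v i
      · have hj : G.Reachable v j := hi.trans hij.reachable
        simp only [dif_pos hi, dif_pos hj]
        have hcw : Even ((hi.some).append (Walk.cons hij (hj.some).reverse)).length :=
          claim _
        rw [Walk.length_append, Walk.length_cons, Walk.length_reverse] at hcw
        rcases Nat.even_or_odd hi.some.length with hpar | hpar
        · have hjo : Odd hj.some.length := by
            rw [Nat.even_iff] at hcw hpar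
            rw [Nat.odd_iff]
            omega
          rw [Even.neg_one_pow hpar, Odd.neg_one_pow hjo]
          ring
        · have hje : Even hj.some.length := by
            rw [Nat.even_iff] at hcw ⊢
            rw [Nat.odd_iff] at hpar
            omega
          rw [Odd.neg_one_pow hpar, Even.neg_one_pow hje]
          ring
      · have hj : ¬ G.Reachable v j := fun hj => hi (hj.trans hij.symm.reachable)
        simp only [dif_neg hi, dif_neg hj]
        ring
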